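/- Let $\epsilon > 0$, integers $k \ge 2$ and $\alpha \in \{2,\dots,k\}$, and let $h:\mathcal S\times\mathcal X\to\mathbb Z_q^m$ be $k^*$-universal. Let $X$ be a random variable on $\mathcal X$, $S$ uniform on $\mathcal S$ and independent of $X$, $U$ uniform on $\mathbb Z_q^m$. If $m \le H_\alpha(X) - \log_q\big(\frac{\alpha^2}{2\epsilon(\alpha-1)\ln q}\big)$, then $D_\alpha(P_{(h(S,X),S)}\|P_U\times P_S) \le \epsilon$. -/

import Mathlib

open Finset

/-- Joint pmf of the pair `(h(S,X), S)` where `S` is uniform on `𝒮` and `X ~ P` is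
independent of `S`. -/
noncomputable def jointPMF {S X : Type*} [Fintype S] [Fintype X] {q m : ℕ}
    (h : S → X → (Fin m → Fin q)) (P : X → ℝ) : (Fin m → Fin q) × S → ℝ :=
  fun p => (Fintype.card S : ℝ)⁻¹ * ∑ x : X, if h p.2 x = p.1 then P x else 0

/-- Rényi divergence of order `α > 1` (base-`q` logarithm). -/
noncomputable def renyiD {Z : Type*} [Fintype Z] (q : ℕ) (α : ℝ) (P Q : Z → ℝ) : ℝ :=
  (α - 1)⁻¹ * Real.logb q (∑ z, P z ^ α * Q z ^ (1 - α))

/-- Rényi entropy of order `α > 1` (base-`q` logarithm). -/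
noncomputable def renyiH {X : Type*} [Fintype X] (q : ℕ) (α : ℝ) (P : X → ℝ) : ℝ :=
  (1 - α)⁻¹ * Real.logb q (∑ x, P x ^ α)

section LhlAux

variable {X : Type*} [Fintype X]


private lemma lhl_exists_pos {P : X → ℝ} (hP0 : ∀ x, 0 ≤ P x) (hP1 : ∑ x, P x = 1) :
    ∃ x, 0 < P x := by
  by_contra hc
  push_neg at hc
  have : ∑ x, P x ≤ 0 := Finset.sum_nonpos fun x _ => hc x
  linarith

private lemma lhl_C_pos {P : X → ℝ} (hP0 : ∀ x, 0 ≤ P x) (hP1 : ∑ x, P x = 1) (α : ℕ) :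
    0 < ∑ x, P x ^ α := by
  obtain ⟨x, hx⟩ := lhl_exists_pos hP0 hP1
  exact lt_of_lt_of_le (pow_pos hx α)
    (Finset.single_le_sum (fun y _ => pow_nonneg (hP0 y) α) (mem_univ x))

private lemma lhl_jensen {P : X → ℝ} (hP0 : ∀ x, 0 ≤ P x) (hP1 : ∑ x, P x = 1)
    {α : ℕ} (hα : 2 ≤ α) {c : ℕ} (hc1 : 1 ≤ c) (hcα : c ≤ α) :
    ∑ x, P x ^ c ≤ (∑ x, P x ^ α) ^ (((c : ℝ) - 1) / ((α : ℝ) - 1)) := by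
  rcases eq_or_lt_of_le hc1 with h1 | h2
  · rw [← h1]
    simp [hP1]
  · have hc2 : 2 ≤ c := h2
    have hαR : (1:ℝ) ≤ ((α:ℝ) - 1) := by
      have : (2:ℝ) ≤ (α:ℝ) := by exact_mod_cast hα
      linarith
    have hcR : (1:ℝ) ≤ ((c:ℝ) - 1) := by
      have : (2:ℝ) ≤ (c:ℝ) := by exact_mod_cast hc2
      linarith
    have hcαR : (c:ℝ) ≤ (α:ℝ) := by exact_mod_cast hcα
    set pp : ℝ := ((α:ℝ) - 1) / ((c:ℝ) - 1) with hpp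
    have hp1 : 1 ≤ pp := (one_le_div (by linarith)).2 (by linarith)
    have key := Real.arith_mean_le_rpow_mean (s := univ) P (fun x => P x ^ (c-1))
        (fun i _ => hP0 i) hP1 (fun i _ => pow_nonneg (hP0 i) _) hp1
    have e1 : ∀ x : X, P x * P x ^ (c-1) = P x ^ c := by
      intro x
      rw [← pow_succ']
      congr 1
      omega
    have e2 : ∀ x : X, P x * ((P x ^ (c-1)) ^ pp) = P x ^ α := by
      intro x
      rw [← Real.rpow_natCast (P x) (c-1), ← Real.rpow_mul (hP0 x)]
      have hcast : ((c - 1 : ℕ) : ℝ) = (c:ℝ) - 1 := by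
        push_cast [Nat.cast_sub hc1]
        ring
      have : ((c - 1 : ℕ) : ℝ) * pp = (α:ℝ) - 1 := by
        rw [hcast, hpp]
        field_simp
      rw [this]
      rw [← Real.rpow_natCast (P x) α]
      rw [show ((α:ℕ):ℝ) = 1 + ((α:ℝ) - 1) by ring]
      rw [Real.rpow_add' (hP0 x) (by intro hcon; rw [show (1:ℝ) + ((α:ℝ)-1) = (α:ℝ) by ring] at hcon; exact absurd hcon (by positivity))]
      · rw [Real.rpow_one]
        congr 1
        ring
    have e3 : 1/pp = ((c:ℝ)-1)/((α:ℝ)-1) := by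
      rw [hpp, one_div_div]
    simp only [e1, e2, e3] at key
    exact key


private lemma lhl_core_phi [DecidableEq X] {α : ℕ} (hα : 2 ≤ α) (P : X → ℝ)
    (hP0 : ∀ x, 0 ≤ P x) (hP1 : ∑ x, P x = 1)
    (hC : 0 < ∑ x, P x ^ α)
    (hJ : ∀ c : ℕ, 1 ≤ c → c ≤ α →
      ∑ x, P x ^ c ≤ (∑ x, P x ^ α) ^ (((c : ℝ) - 1) / ((α : ℝ) - 1)))
    (T : Finset (Fin α)) (hT : T.card ≤ α - 1)
    (φ : Fin α → Fin α) (hφ : ∀ i ∈ T, φ i ∉ T) :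
    ∑ p : Fin α → X, (∏ i, P (p i)) * (∏ i ∈ T, if p i = p (φ i) then (1:ℝ) else 0)
      ≤ (∑ x, P x ^ α) ^ ((T.card : ℝ) / ((α:ℝ) - 1)) := by
  classical
  set C := ∑ x, P x ^ α with hCdef
  set e := Equiv.piEquivPiSubtypeProd (fun i : Fin α => i ∈ T) (fun _ => X) with he
  set ψ : {x : Fin α // x ∈ T} → {x : Fin α // ¬ x ∈ T} := fun i => ⟨φ i, hφ i i.2⟩ with hψ
  set n : {x : Fin α // ¬ x ∈ T} → ℕ :=
    fun j => (univ.filter fun i : {x : Fin α // x ∈ T} => ψ i = j).card with hn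
  have key : ∑ p : Fin α → X, (∏ i, P (p i)) * (∏ i ∈ T, if p i = p (φ i) then (1:ℝ) else 0)
      = ∏ j : {x : Fin α // ¬ x ∈ T}, ∑ v : X, P v ^ (n j + 1) := by
    rw [← Equiv.sum_comp e.symm
      (fun p : Fin α → X => (∏ i, P (p i)) * (∏ i ∈ T, if p i = p (φ i) then (1:ℝ) else 0))]
    rw [Fintype.sum_prod_type]
    have hper : ∀ (f : {x : Fin α // x ∈ T} → X) (g : {x : Fin α // ¬ x ∈ T} → X),
        (∏ i, P ((e.symm (f, g)) i)) *
            (∏ i ∈ T, if (e.symm (f, g)) i = (e.symm (f, g)) (φ i) then (1:ℝ) else 0)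
          = (∏ i : {x : Fin α // x ∈ T}, (P (f i) * if f i = g (ψ i) then (1:ℝ) else 0)) *
            ∏ j : {x : Fin α // ¬ x ∈ T}, P (g j) := by
      intro f g
      have hv : ∀ i : Fin α, (e.symm (f, g)) i = if h : i ∈ T then f ⟨i, h⟩ else g ⟨i, h⟩ := by
        intro i
        simp [he, Equiv.piEquivPiSubtypeProd_symm_apply]
      have h1 : (∏ i, P ((e.symm (f, g)) i))
          = (∏ i : {x : Fin α // x ∈ T}, P (f i)) * ∏ j : {x : Fin α // ¬ x ∈ T}, P (g j) := by
        rw [← Fintype.prod_subtype_mul_prod_subtype (fun i : Fin α => i ∈ T)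
          (fun i => P ((e.symm (f, g)) i))]
        congr 1
        · refine Finset.prod_congr ?_ fun i _ => by rw [hv i.1, dif_pos i.2]
          congr!
        · refine Finset.prod_congr ?_ fun i _ => by rw [hv i.1, dif_neg i.2]
          congr!
      have h2 : (∏ i ∈ T, if (e.symm (f, g)) i = (e.symm (f, g)) (φ i) then (1:ℝ) else 0)
          = ∏ i : {x : Fin α // x ∈ T}, if f i = g (ψ i) then (1:ℝ) else 0 := by
        rw [← Finset.prod_coe_sort T]
        refine Fintype.prod_congr _ _ fun i => ?_
        have hi : (i : Fin α) ∈ T := i.2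
        have hφi : φ (i : Fin α) ∉ T := hφ _ hi
        rw [hv, hv, dif_pos hi, dif_neg hφi]
      rw [h1, h2, mul_right_comm, ← Finset.prod_mul_distrib]
    simp only [hper]
    rw [Finset.sum_comm]
    have hswap : ∀ g : {x : Fin α // ¬ x ∈ T} → X,
        ∑ f : {x : Fin α // x ∈ T} → X,
          (∏ i : {x : Fin α // x ∈ T}, (P (f i) * if f i = g (ψ i) then (1:ℝ) else 0)) *
            (∏ j : {x : Fin α // ¬ x ∈ T}, P (g j))
        = ∏ j : {x : Fin α // ¬ x ∈ T}, P (g j) ^ (n j + 1) := by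
      intro g
      rw [← Finset.sum_mul]
      have hin : ∑ f : {x : Fin α // x ∈ T} → X,
          (∏ i : {x : Fin α // x ∈ T}, (P (f i) * if f i = g (ψ i) then (1:ℝ) else 0))
          = ∏ i : {x : Fin α // x ∈ T}, P (g (ψ i)) := by
        have := Finset.prod_univ_sum (fun _ : {x : Fin α // x ∈ T} => (univ : Finset X))
          (fun i v => P v * if v = g (ψ i) then (1:ℝ) else 0)
        simp only [Fintype.piFinset_univ] at this
        rw [← this]
        refine Fintype.prod_congr _ _ fun i => ?_
        simp [mul_ite, mul_one, mul_zero, Finset.sum_ite_eq']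
      rw [hin]
      have hfib := Finset.prod_fiberwise (univ : Finset {x : Fin α // x ∈ T}) ψ
        (fun i => P (g (ψ i)))
      rw [← hfib, ← Finset.prod_mul_distrib]
      refine Fintype.prod_congr _ _ fun j => ?_
      have : ∏ i ∈ univ.filter fun i : {x : Fin α // x ∈ T} => ψ i = j, P (g (ψ i))
          = P (g j) ^ (n j) := by
        rw [Finset.prod_congr rfl (fun i hi => by
          rw [(Finset.mem_filter.1 hi).2]), Finset.prod_const]
      rw [this, pow_succ]
    simp only [hswap]
    have := Finset.prod_univ_sum (fun _ : {x : Fin α // ¬ x ∈ T} => (univ : Finset X))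
      (fun j v => P v ^ (n j + 1))
    simp only [Fintype.piFinset_univ] at this
    rw [← this]
  rw [key]
  have hsum : ∑ j : {x : Fin α // ¬ x ∈ T}, n j = T.card := by
    have := Finset.card_eq_sum_card_fiberwise
      (f := ψ) (s := (univ : Finset {x : Fin α // x ∈ T}))
      (t := (univ : Finset {x : Fin α // ¬ x ∈ T})) (fun x _ => mem_univ _)
    simp only [Finset.card_univ, Fintype.card_coe] at this
    rw [← this]
  calc ∏ j : {x : Fin α // ¬ x ∈ T}, ∑ v : X, P v ^ (n j + 1)
      ≤ ∏ j : {x : Fin α // ¬ x ∈ T}, C ^ (((n j : ℝ) + 1 - 1) / ((α:ℝ) - 1)) := by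
        refine Finset.prod_le_prod (fun j _ => ?_) (fun j _ => ?_)
        · exact Finset.sum_nonneg fun v _ => pow_nonneg (hP0 v) _
        · have hnj : n j ≤ T.card := by
            exact le_trans (Finset.card_filter_le _ _) (by simp [Fintype.card_coe])
          have := hJ (n j + 1) (by omega) (by omega)
          convert this using 3
          · rfl
          push_cast
          ring
    _ = C ^ ((T.card : ℝ) / ((α:ℝ) - 1)) := by
        have h1 : ∀ j : {x : Fin α // ¬ x ∈ T},
            C ^ (((n j : ℝ) + 1 - 1) / ((α:ℝ) - 1)) = (C ^ (1/((α:ℝ)-1))) ^ (n j) := by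
          intro j
          rw [← Real.rpow_natCast (C ^ (1/((α:ℝ)-1))) (n j), ← Real.rpow_mul hC.le]
          congr 1
          ring
        simp only [h1]
        rw [Finset.prod_pow_eq_pow_sum, hsum,
          ← Real.rpow_natCast (C ^ (1/((α:ℝ)-1))) T.card, ← Real.rpow_mul hC.le]
        congr 1
        ring
  


private lemma lhl_repeat_bound [DecidableEq X] {α : ℕ} (hα : 2 ≤ α) (P : X → ℝ)
    (hP0 : ∀ x, 0 ≤ P x) (hP1 : ∑ x, P x = 1)
    (hC : 0 < ∑ x, P x ^ α)
    (hJ : ∀ c : ℕ, 1 ≤ c → c ≤ α →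
      ∑ x, P x ^ c ≤ (∑ x, P x ^ α) ^ (((c : ℝ) - 1) / ((α : ℝ) - 1)))
    (hcore : ∀ (T : Finset (Fin α)), T.card ≤ α - 1 → ∀ (φ : Fin α → Fin α),
      (∀ i ∈ T, φ i ∉ T) →
      ∑ p : Fin α → X, (∏ i, P (p i)) * (∏ i ∈ T, if p i = p (φ i) then (1:ℝ) else 0)
        ≤ (∑ x, P x ^ α) ^ ((T.card : ℝ) / ((α:ℝ) - 1)))
    (T : Finset (Fin α)) (hT : T.card ≤ α - 1) :
    ∑ p : Fin α → X, (∏ i, P (p i)) *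
        (∏ i ∈ T, if ∃ j, j < i ∧ p j = p i then (1:ℝ) else 0)
      ≤ (∏ i ∈ T, ((i : ℕ) : ℝ)) * (∑ x, P x ^ α) ^ ((T.card : ℝ) / ((α:ℝ) - 1)) := by
  classical
  haveI : NeZero α := ⟨by omega⟩
  set C := ∑ x, P x ^ α with hCdef
  set Φ : Finset (Fin α → Fin α) := univ.filter
    (fun φ => ∀ i, (i ∈ T → (φ i < i ∧ φ i ∉ T)) ∧ (i ∉ T → φ i = 0)) with hΦ
  have pointwise : ∀ p : Fin α → X,
      (∏ i ∈ T, if ∃ j, j < i ∧ p j = p i then (1:ℝ) else 0)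
        ≤ ∑ φ ∈ Φ, ∏ i ∈ T, (if p i = p (φ i) then (1:ℝ) else 0) := by
    intro p
    by_cases hall : ∀ i ∈ T, ∃ j, j < i ∧ p j = p i
    · have lhs1 : (∏ i ∈ T, if ∃ j, j < i ∧ p j = p i then (1:ℝ) else 0) = 1 :=
        Finset.prod_eq_one fun i hi => if_pos (hall i hi)
      rw [lhs1]
      set φ₀ : Fin α → Fin α := fun i =>
        if hi : i ∈ T then
          ((univ.filter fun j => j < i ∧ p j = p i).min' (by
            obtain ⟨j, hj⟩ := hall i hi
            exact ⟨j, by simp [hj]⟩))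
        else 0 with hφ₀
      have hmem : ∀ i (hi : i ∈ T), φ₀ i < i ∧ p (φ₀ i) = p i := by
        intro i hi
        have : φ₀ i ∈ univ.filter fun j => j < i ∧ p j = p i := by
          rw [hφ₀]
          simp only [dif_pos hi]
          exact Finset.min'_mem _ _
        simpa using this
      have hnotT : ∀ i (hi : i ∈ T), φ₀ i ∉ T := by
        intro i hi hcon
        obtain ⟨j', hj'lt, hj'eq⟩ := hall _ hcon
        have hj'mem : j' ∈ univ.filter fun j => j < i ∧ p j = p i := by
          have h1 := (hmem i hi).1
          have h2 := (hmem i hi).2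
          simp only [Finset.mem_filter, Finset.mem_univ, true_and]
          exact ⟨lt_trans hj'lt h1, by rw [hj'eq, h2]⟩
        have : φ₀ i ≤ j' := by
          have : (univ.filter fun j => j < i ∧ p j = p i).min' _ ≤ j' :=
            Finset.min'_le _ _ hj'mem
          rw [hφ₀]
          simp only [dif_pos hi]
          exact this
        exact absurd hj'lt (not_lt.2 this)
      have hφ₀Φ : φ₀ ∈ Φ := by
        rw [hΦ]
        simp only [Finset.mem_filter, Finset.mem_univ, true_and]
        intro i
        constructor
        · intro hi
          exact ⟨(hmem i hi).1, hnotT i hi⟩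
        · intro hi
          rw [hφ₀]
          simp [dif_neg hi]
      have hterm : (∏ i ∈ T, if p i = p (φ₀ i) then (1:ℝ) else 0) = 1 :=
        Finset.prod_eq_one fun i hi => if_pos ((hmem i hi).2).symm
      calc (1:ℝ) = ∏ i ∈ T, (if p i = p (φ₀ i) then (1:ℝ) else 0) := hterm.symm
        _ ≤ ∑ φ ∈ Φ, ∏ i ∈ T, (if p i = p (φ i) then (1:ℝ) else 0) :=
          Finset.single_le_sum (f := fun φ => ∏ i ∈ T, (if p i = p (φ i) then (1:ℝ) else 0))
            (fun φ _ => Finset.prod_nonneg fun i _ => by positivity) hφ₀Φ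
    · push_neg at hall
      obtain ⟨i, hiT, hi⟩ := hall
      have : (∏ i ∈ T, if ∃ j, j < i ∧ p j = p i then (1:ℝ) else 0) = 0 := by
        refine Finset.prod_eq_zero hiT ?_
        rw [if_neg]
        rintro ⟨j, hj1, hj2⟩
        exact absurd hj2 (hi j hj1)
      rw [this]
      exact Finset.sum_nonneg fun φ _ =>
        Finset.prod_nonneg fun i _ => by positivity
  have count : (Φ.card : ℝ) ≤ ∏ i ∈ T, ((i : ℕ) : ℝ) := by
    have hsub : Φ ⊆ Fintype.piFinset
        (fun i : Fin α => if i ∈ T then univ.filter (· < i) else {0}) := by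
      intro φ hφ
      rw [hΦ] at hφ
      simp only [Finset.mem_filter, Finset.mem_univ, true_and] at hφ
      rw [Fintype.mem_piFinset]
      intro i
      by_cases hi : i ∈ T
      · rw [if_pos hi]
        simp [((hφ i).1 hi).1]
      · rw [if_neg hi]
        simp [(hφ i).2 hi]
    have hcard := Finset.card_le_card hsub
    rw [Fintype.card_piFinset] at hcard
    have hcard2 : ∏ i : Fin α, (if i ∈ T then univ.filter (· < i) else {0}).card
        = ∏ i ∈ T, (i : ℕ) := by
      have : ∀ i : Fin α, (if i ∈ T then univ.filter (· < i) else ({0} : Finset (Fin α))).card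
          = if i ∈ T then (i : ℕ) else 1 := by
        intro i
        by_cases hi : i ∈ T
        · rw [if_pos hi, if_pos hi]
          have : univ.filter (· < i) = Finset.Iio i := by
            ext j
            simp
          rw [this]
          simp
        · rw [if_neg hi, if_neg hi]
          simp
      simp only [this]
      rw [Finset.prod_ite_mem]
      simp
    rw [hcard2] at hcard
    calc (Φ.card : ℝ) ≤ ((∏ i ∈ T, (i : ℕ) : ℕ) : ℝ) := by exact_mod_cast hcard
      _ = ∏ i ∈ T, ((i : ℕ) : ℝ) := by push_cast; rfl
  calc ∑ p : Fin α → X, (∏ i, P (p i)) *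
        (∏ i ∈ T, if ∃ j, j < i ∧ p j = p i then (1:ℝ) else 0)
      ≤ ∑ p : Fin α → X, (∏ i, P (p i)) *
        (∑ φ ∈ Φ, ∏ i ∈ T, (if p i = p (φ i) then (1:ℝ) else 0)) := by
        refine Finset.sum_le_sum fun p _ => ?_
        exact mul_le_mul_of_nonneg_left (pointwise p)
          (Finset.prod_nonneg fun i _ => hP0 _)
    _ = ∑ φ ∈ Φ, ∑ p : Fin α → X, (∏ i, P (p i)) *
        (∏ i ∈ T, (if p i = p (φ i) then (1:ℝ) else 0)) := by
        rw [Finset.sum_comm]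
        exact Finset.sum_congr rfl fun p _ => by rw [Finset.mul_sum]
    _ ≤ ∑ φ ∈ Φ, C ^ ((T.card : ℝ) / ((α:ℝ) - 1)) := by
        refine Finset.sum_le_sum fun φ hφmem => ?_
        rw [hΦ] at hφmem
        simp only [Finset.mem_filter, Finset.mem_univ, true_and] at hφmem
        exact hcore T hT φ (fun i hi => ((hφmem i).1 hi).2)
    _ = (Φ.card : ℝ) * C ^ ((T.card : ℝ) / ((α:ℝ) - 1)) := by
        rw [Finset.sum_const, nsmul_eq_mul]
    _ ≤ (∏ i ∈ T, ((i : ℕ) : ℝ)) * C ^ ((T.card : ℝ) / ((α:ℝ) - 1)) := by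
        exact mul_le_mul_of_nonneg_right count (Real.rpow_nonneg hC.le _)

end LhlAux

private lemma lhl_prob_bound {S X : Type*} [Fintype S] [Fintype X] [Nonempty S] [DecidableEq X]
    (q m k α : ℕ) (hq : 2 ≤ q) (hα2 : 2 ≤ α) (hαk : α ≤ k)
    (h : S → X → (Fin m → Fin q))
    (hUniv : ∀ l : ℕ, 2 ≤ l → l ≤ k → ∀ x : Fin l → X, Function.Injective x →
      ((univ.filter fun s : S => ∀ i j, h s (x i) = h s (x j)).card : ℝ)
          / (Fintype.card S : ℝ)
        ≤ ((q : ℝ) ^ (m * (l - 1)))⁻¹)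
    (p : Fin α → X) :
    ((univ.filter fun s : S => ∀ i j, h s (p i) = h s (p j)).card : ℝ)
        / (Fintype.card S : ℝ)
      ≤ ∏ i ∈ univ.filter (fun i : Fin α => (i:ℕ) ≠ 0),
          ((((q:ℝ) ^ m)⁻¹) + if ∃ j, j < i ∧ p j = p i then (1:ℝ) else 0) := by
  classical
  haveI : NeZero α := ⟨by omega⟩
  have hq0 : (0:ℝ) < (q:ℝ) := by positivity
  set a : ℝ := ((q:ℝ) ^ m)⁻¹ with hadef
  have ha : 0 < a := by positivity
  have cSpos : (0:ℝ) < (Fintype.card S : ℝ) := by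
    have := Fintype.card_pos (α := S)
    positivity
  set t : Finset X := univ.image p with htdef
  set D : ℕ := t.card with hDdef
  have hD1 : 1 ≤ D := by
    have : t.Nonempty := (Finset.univ_nonempty).image p
    exact Finset.card_pos.2 this
  have hDα : D ≤ α := by
    calc D ≤ (univ : Finset (Fin α)).card := Finset.card_image_le
      _ = α := by simp
  have step1 : ((univ.filter fun s : S => ∀ i j, h s (p i) = h s (p j)).card : ℝ)
      / (Fintype.card S : ℝ) ≤ a ^ (D - 1) := by
    by_cases hD : 2 ≤ D
    · set e : Fin D → X := fun i => ((t.equivFin.symm i) : X) with hedef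
      have hinj : Function.Injective e := fun i j hij =>
        (Equiv.injective _) (Subtype.coe_injective hij)
      have hsub : (univ.filter fun s : S => ∀ i j, h s (p i) = h s (p j))
          ⊆ (univ.filter fun s : S => ∀ i j, h s (e i) = h s (e j)) := by
        intro s hs
        simp only [Finset.mem_filter, Finset.mem_univ, true_and] at hs ⊢
        intro i j
        have hei : ∃ ai, p ai = e i := by
          obtain ⟨ai, _, hai⟩ := Finset.mem_image.1 (t.equivFin.symm i).2
          exact ⟨ai, hai⟩
        have hej : ∃ aj, p aj = e j := by
          obtain ⟨aj, _, haj⟩ := Finset.mem_image.1 (t.equivFin.symm j).2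
          exact ⟨aj, haj⟩
        obtain ⟨ai, hai⟩ := hei
        obtain ⟨aj, haj⟩ := hej
        rw [← hai, ← haj]
        exact hs ai aj
      have hU := hUniv D hD (le_trans hDα hαk) e hinj
      calc ((univ.filter fun s : S => ∀ i j, h s (p i) = h s (p j)).card : ℝ)
            / (Fintype.card S : ℝ)
          ≤ ((univ.filter fun s : S => ∀ i j, h s (e i) = h s (e j)).card : ℝ)
            / (Fintype.card S : ℝ) := by
            exact (div_le_div_iff_of_pos_right cSpos).mpr
              (by exact_mod_cast Finset.card_le_card hsub)
        _ ≤ ((q : ℝ) ^ (m * (D - 1)))⁻¹ := hU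
        _ = a ^ (D - 1) := by rw [hadef, pow_mul, inv_pow]
    · have hD1' : D - 1 = 0 := by omega
      rw [hD1', pow_zero]
      rw [div_le_one cSpos]
      exact_mod_cast Finset.card_filter_le _ _
  have step2 : a ^ (D - 1) ≤ ∏ i ∈ univ.filter (fun i : Fin α => (i:ℕ) ≠ 0),
      (a + if ∃ j, j < i ∧ p j = p i then (1:ℝ) else 0) := by
    set Iset := univ.filter (fun i : Fin α => (i:ℕ) ≠ 0) with hIdef
    set newS := univ.filter (fun i : Fin α => ∀ j, j < i → p j ≠ p i) with hnewdef
    have hnewcard : newS.card = D := by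
      refine Finset.card_bij (fun i _ => p i) ?_ ?_ ?_
      · intro i hi
        exact Finset.mem_image_of_mem p (Finset.mem_univ i)
      · intro a1 ha1 a2 ha2 hpe
        simp only [hnewdef, Finset.mem_filter, Finset.mem_univ, true_and] at ha1 ha2
        rcases lt_trichotomy a1 a2 with hlt | heq | hgt
        · exact absurd hpe (ha2 a1 hlt)
        · exact heq
        · exact absurd hpe.symm (ha1 a2 hgt)
      · intro b hb
        obtain ⟨i₀, _, hi₀⟩ := Finset.mem_image.1 hb
        have hne : (univ.filter fun j => p j = b).Nonempty := ⟨i₀, by simp [hi₀]⟩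
        set i₁ := (univ.filter fun j => p j = b).min' hne with hi₁def
        have hmem := Finset.min'_mem _ hne
        simp only [Finset.mem_filter, Finset.mem_univ, true_and] at hmem
        refine ⟨i₁, ?_, hmem⟩
        simp only [hnewdef, Finset.mem_filter, Finset.mem_univ, true_and]
        intro j hj hcon
        have : i₁ ≤ j := Finset.min'_le _ _ (by simp [hcon]; exact hmem)
        exact absurd hj (not_lt.2 this)
    have h0mem : (0 : Fin α) ∈ newS := by
      simp only [hnewdef, Finset.mem_filter, Finset.mem_univ, true_and]
      intro j hj
      exact absurd hj (by simp [Fin.lt_def])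
    have hfilt : Iset.filter (fun i => ¬ ∃ j, j < i ∧ p j = p i) = newS.erase 0 := by
      ext i
      simp only [hIdef, hnewdef, Finset.mem_filter, Finset.mem_univ, true_and,
        Finset.mem_erase, not_exists, not_and]
      constructor
      · rintro ⟨h1, h2⟩
        exact ⟨fun hc => h1 (by simp [hc]), h2⟩
      · rintro ⟨h1, h2⟩
        exact ⟨fun hc => h1 (Fin.ext (by simp [hc])), h2⟩
    calc a ^ (D - 1)
        = ∏ i ∈ Iset, (if ∃ j, j < i ∧ p j = p i then (1:ℝ) else a) := by
          rw [Finset.prod_ite, Finset.prod_const_one, one_mul, Finset.prod_const, hfilt,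
            Finset.card_erase_of_mem h0mem, hnewcard]
      _ ≤ ∏ i ∈ Iset, (a + if ∃ j, j < i ∧ p j = p i then (1:ℝ) else 0) := by
          refine Finset.prod_le_prod (fun i _ => ?_) (fun i _ => ?_)
          · split_ifs
            · norm_num
            · exact ha.le
          · split_ifs
            · linarith
            · linarith
  exact le_trans step1 step2

set_option maxHeartbeats 1000000 in
/-- Theorem 3.1: for a `k*`-universal hash function and integer `α ∈ {2,…,k}`, if
`m ≤ H_α(X) - log_q(α²/(2ε(α-1)ln q))` then `D_α(P_{(h(S,X),S)} ‖ P_U × P_S) ≤ ε`. -/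
theorem lhl_main {S X : Type*} [Fintype S] [Fintype X] [Nonempty S] [Nonempty X]
    (q m k α : ℕ) (hq : 2 ≤ q) (hm : 1 ≤ m) (hk : 2 ≤ k) (hα2 : 2 ≤ α) (hαk : α ≤ k)
    (ε : ℝ) (hε : 0 < ε)
    (h : S → X → (Fin m → Fin q)) (P : X → ℝ)
    (hP0 : ∀ x, 0 ≤ P x) (hP1 : ∑ x, P x = 1)
    (hUniv : ∀ l : ℕ, 2 ≤ l → l ≤ k → ∀ x : Fin l → X, Function.Injective x →
      ((univ.filter fun s : S => ∀ i j, h s (x i) = h s (x j)).card : ℝ)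
          / (Fintype.card S : ℝ)
        ≤ ((q : ℝ) ^ (m * (l - 1)))⁻¹)
    (hmH : (m : ℝ) ≤ renyiH q α P
        - Real.logb q ((α : ℝ) ^ 2 / (2 * ε * ((α : ℝ) - 1) * Real.log q))) :
    renyiD q α (jointPMF h P) (fun _ => ((q : ℝ) ^ m)⁻¹ * (Fintype.card S : ℝ)⁻¹) ≤ ε := by
  classical
  haveI : NeZero α := ⟨by omega⟩
  -- basic positivity facts
  have hq1 : (1:ℝ) < (q:ℝ) := by exact_mod_cast lt_of_lt_of_le one_lt_two (by exact_mod_cast hq)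
  have hq0 : (0:ℝ) < (q:ℝ) := lt_trans one_pos hq1
  have hqm0 : (0:ℝ) < (q:ℝ) ^ m := by positivity
  have hlogq : 0 < Real.log q := Real.log_pos hq1
  have hα1R : (1:ℝ) < (α:ℝ) := by exact_mod_cast (by omega : 1 < α)
  have hαsub : (0:ℝ) < (α:ℝ) - 1 := by linarith
  have hcSpos : (0:ℝ) < (Fintype.card S : ℝ) := by
    have := Fintype.card_pos (α := S)
    positivity
  set cS : ℝ := (Fintype.card S : ℝ) with hcSdef
  set C : ℝ := ∑ x, P x ^ α with hCdef
  have hC : 0 < C := lhl_C_pos hP0 hP1 α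
  have hJ : ∀ c : ℕ, 1 ≤ c → c ≤ α →
      ∑ x, P x ^ c ≤ C ^ (((c:ℝ)-1)/((α:ℝ)-1)) :=
    fun c hc1 hcα => lhl_jensen hP0 hP1 hα2 hc1 hcα
  set Iset : Finset (Fin α) := univ.filter (fun i : Fin α => (i:ℕ) ≠ 0) with hIdef
  have hIcard : Iset.card = α - 1 := by
    have : Iset = (univ : Finset (Fin α)).erase 0 := by
      ext i
      simp only [hIdef, Finset.mem_filter, Finset.mem_univ, true_and, Finset.mem_erase,
        and_true]
      constructor
      · exact fun h1 hc => h1 (by simp [hc])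
      · exact fun h1 hc => h1 (Fin.ext (by simp [hc]))
    rw [this, Finset.card_erase_of_mem (Finset.mem_univ _)]
    simp
  -- the divergence sum
  set SumZ : ℝ := ∑ z : (Fin m → Fin q) × S,
      jointPMF h P z ^ (α:ℝ) * (((q:ℝ) ^ m)⁻¹ * cS⁻¹) ^ (1 - (α:ℝ)) with hSumZdef
  -- notation
  set F : S → (Fin m → Fin q) → ℝ :=
      fun s u => ∑ x, if h s x = u then P x else 0 with hFdef
  set W : (Fin α → X) → ℝ := fun p => ∏ i, P (p i) with hWdef
  set N : (Fin α → X) → ℕ :=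
      fun p => (univ.filter fun s : S => ∀ i j, h s (p i) = h s (p j)).card with hNdef
  have hF0 : ∀ s u, 0 ≤ F s u := fun s u =>
    Finset.sum_nonneg fun x _ => by split_ifs
                                    exacts [hP0 x, le_rfl]
  have hW0 : ∀ p, 0 ≤ W p := fun p => Finset.prod_nonneg fun i _ => hP0 _
  set A : ℝ := ((q:ℝ) ^ m) ^ ((α:ℝ) - 1) with hAdef
  have hA0 : 0 < A := Real.rpow_pos_of_pos hqm0 _
  -- Step A : rewrite SumZ
  have hQconst : (((q:ℝ) ^ m)⁻¹ * cS⁻¹) ^ (1 - (α:ℝ))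
      = A * cS ^ ((α:ℝ) - 1) := by
    rw [← mul_inv, Real.inv_rpow (by positivity), ← Real.rpow_neg (by positivity), neg_sub,
      Real.mul_rpow hqm0.le hcSpos.le, hAdef]
  have hSc : (cS⁻¹) ^ (α:ℕ) * cS ^ ((α:ℝ) - 1) = cS⁻¹ := by
    rw [inv_pow, ← Real.rpow_natCast cS α, ← Real.rpow_neg hcSpos.le,
      ← Real.rpow_add hcSpos]
    rw [show -(α:ℝ) + ((α:ℝ) - 1) = -1 by ring, Real.rpow_neg_one]
  have hz : ∀ z : (Fin m → Fin q) × S,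
      jointPMF h P z ^ (α:ℝ) * (((q:ℝ) ^ m)⁻¹ * cS⁻¹) ^ (1 - (α:ℝ))
        = A * cS⁻¹ * (F z.2 z.1) ^ (α:ℕ) := by
    intro z
    have h1 : jointPMF h P z = cS⁻¹ * F z.2 z.1 := rfl
    rw [h1, hQconst, Real.rpow_natCast (cS⁻¹ * F z.2 z.1) α, mul_pow]
    rw [show (cS⁻¹ ^ (α:ℕ) * F z.2 z.1 ^ (α:ℕ)) * (A * cS ^ ((α:ℝ) - 1))
        = A * ((cS⁻¹) ^ (α:ℕ) * cS ^ ((α:ℝ) - 1)) * F z.2 z.1 ^ (α:ℕ) by ring, hSc]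
  have stepB : ∀ s : S, ∑ u, (F s u) ^ (α:ℕ)
      = ∑ p : Fin α → X, W p * (if ∀ i j, h s (p i) = h s (p j) then (1:ℝ) else 0) := by
    intro s
    have hpow : ∀ u, (F s u) ^ (α:ℕ)
        = ∑ p : Fin α → X, ∏ i, (if h s (p i) = u then P (p i) else 0) := by
      intro u
      rw [hFdef]
      rw [Finset.sum_pow' univ (fun x => if h s x = u then P x else 0) α]
      simp [Fintype.piFinset_univ]
    simp only [hpow]
    rw [Finset.sum_comm]
    refine Finset.sum_congr rfl fun p _ => ?_
    have hprod : ∀ u, (∏ i, if h s (p i) = u then P (p i) else 0)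
        = if ∀ i, h s (p i) = u then W p else 0 := fun u => by
      rw [Fintype.prod_ite_zero]
      simp only [hWdef]
      congr
    simp only [hprod]
    by_cases hall : ∀ i j : Fin α, h s (p i) = h s (p j)
    · rw [if_pos hall]
      have heq : ∀ u, (∀ i, h s (p i) = u) ↔ (h s (p 0) = u) := fun u =>
        ⟨fun hh => hh _, fun hu i => (hall i _).trans hu⟩
      simp only [heq]
      rw [Finset.sum_ite_eq univ (h s (p 0)) (fun _ => W p)]
      simp
    · rw [if_neg hall]
      have hnone : ∀ u, ¬ (∀ i, h s (p i) = u) := by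
        intro u hu
        exact hall fun i j => (hu i).trans (hu j).symm
      simp [hnone]
  have stepA : SumZ = A * ∑ p : Fin α → X, W p * ((N p : ℝ) / cS) := by
    calc SumZ = ∑ z : (Fin m → Fin q) × S, A * cS⁻¹ * (F z.2 z.1) ^ (α:ℕ) :=
          Finset.sum_congr rfl fun z _ => hz z
      _ = A * cS⁻¹ * ∑ z : (Fin m → Fin q) × S, (F z.2 z.1) ^ (α:ℕ) := by
          rw [← Finset.mul_sum]
      _ = A * cS⁻¹ * ∑ s : S, ∑ u : Fin m → Fin q, (F s u) ^ (α:ℕ) := by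
          rw [Fintype.sum_prod_type, Finset.sum_comm]
      _ = A * cS⁻¹ * ∑ s : S, ∑ p : Fin α → X,
            W p * (if ∀ i j, h s (p i) = h s (p j) then (1:ℝ) else 0) := by
          rw [Finset.sum_congr rfl fun s _ => stepB s]
      _ = A * cS⁻¹ * ∑ p : Fin α → X, W p * (N p : ℝ) := by
          rw [Finset.sum_comm]
          congr 1
          refine Finset.sum_congr rfl fun p _ => ?_
          rw [← Finset.mul_sum, Finset.sum_boole]
      _ = A * ∑ p : Fin α → X, W p * ((N p : ℝ) / cS) := by
          have : ∑ p : Fin α → X, W p * ((N p : ℝ) / cS)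
              = cS⁻¹ * ∑ p : Fin α → X, W p * (N p : ℝ) := by
            rw [Finset.mul_sum]
            refine Finset.sum_congr rfl fun p _ => ?_
            rw [div_eq_mul_inv]
            ring
          rw [this]
          ring
  -- probability bound per tuple
  set r : Fin α → (Fin α → X) → ℝ :=
      fun i p => if ∃ j, j < i ∧ p j = p i then (1:ℝ) else 0 with hrdef
  have hr0 : ∀ i p, 0 ≤ r i p := fun i p => by rw [hrdef]; positivity
  have hprob : ∀ p : Fin α → X, ((N p : ℝ) / cS)
      ≤ ∏ i ∈ Iset, (((q:ℝ) ^ m)⁻¹ + r i p) :=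
    fun p => lhl_prob_bound q m k α hq hα2 hαk h hUniv p
  have hAprod : ∀ p : Fin α → X, A * ∏ i ∈ Iset, (((q:ℝ) ^ m)⁻¹ + r i p)
      = ∏ i ∈ Iset, (1 + (q:ℝ) ^ m * r i p) := by
    intro p
    have hA : A = ∏ _i ∈ Iset, (q:ℝ) ^ m := by
      rw [Finset.prod_const, hIcard, hAdef, ← Real.rpow_natCast ((q:ℝ) ^ m) (α - 1)]
      congr 1
      have : ((α - 1 : ℕ) : ℝ) = (α:ℝ) - 1 := by
        have : 1 ≤ α := by omega
        push_cast [Nat.cast_sub this]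
        ring
      rw [this]
    rw [hA, ← Finset.prod_mul_distrib]
    refine Finset.prod_congr rfl fun i _ => ?_
    rw [mul_add, mul_inv_cancel₀ (ne_of_gt hqm0)]
  have step2 : SumZ ≤ ∑ p : Fin α → X, W p * ∏ i ∈ Iset, (1 + (q:ℝ) ^ m * r i p) := by
    rw [stepA]
    calc A * ∑ p : Fin α → X, W p * ((N p : ℝ) / cS)
        ≤ A * ∑ p : Fin α → X, W p * ∏ i ∈ Iset, (((q:ℝ) ^ m)⁻¹ + r i p) := by
          refine mul_le_mul_of_nonneg_left ?_ hA0.le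
          refine Finset.sum_le_sum fun p _ => ?_
          exact mul_le_mul_of_nonneg_left (hprob p) (hW0 p)
      _ = ∑ p : Fin α → X, W p * ∏ i ∈ Iset, (1 + (q:ℝ) ^ m * r i p) := by
          rw [Finset.mul_sum]
          refine Finset.sum_congr rfl fun p _ => ?_
          rw [← hAprod p]
          ring
  -- expand the product and use the repeat bound
  set β : ℝ := (q:ℝ) ^ m * C ^ (1/((α:ℝ)-1)) with hβdef
  have hβ0 : 0 < β := by
    have := Real.rpow_pos_of_pos hC (1/((α:ℝ)-1))
    positivity
  have step3 : ∑ p : Fin α → X, W p * ∏ i ∈ Iset, (1 + (q:ℝ) ^ m * r i p)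
      ≤ ∏ i ∈ Iset, (1 + β * ((i:ℕ):ℝ)) := by
    have hexp : ∀ p : Fin α → X, ∏ i ∈ Iset, (1 + (q:ℝ) ^ m * r i p)
        = ∑ T ∈ Iset.powerset, ((q:ℝ) ^ m) ^ T.card * ∏ i ∈ T, r i p := by
      intro p
      rw [show (fun i => 1 + (q:ℝ) ^ m * r i p) = fun i => ((q:ℝ) ^ m * r i p + 1) by
        funext i; ring]
      rw [Finset.prod_add (fun i => (q:ℝ) ^ m * r i p) (fun _ => (1:ℝ)) Iset]
      refine Finset.sum_congr rfl fun T hT => ?_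
      rw [Finset.prod_const_one, mul_one, Finset.prod_mul_distrib, Finset.prod_const]
    have hrep : ∀ T ∈ Iset.powerset,
        ∑ p : Fin α → X, W p * ∏ i ∈ T, r i p
          ≤ (∏ i ∈ T, ((i:ℕ):ℝ)) * C ^ ((T.card:ℝ)/((α:ℝ)-1)) := by
      intro T hT
      have hTcard : T.card ≤ α - 1 := by
        have h1 := Finset.card_le_card (Finset.mem_powerset.1 hT)
        omega
      exact lhl_repeat_bound hα2 P hP0 hP1 hC hJ
        (fun T' hT' φ hφ => lhl_core_phi hα2 P hP0 hP1 hC hJ T' hT' φ hφ) T hTcard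
    calc ∑ p : Fin α → X, W p * ∏ i ∈ Iset, (1 + (q:ℝ) ^ m * r i p)
        = ∑ p : Fin α → X, ∑ T ∈ Iset.powerset,
            W p * (((q:ℝ) ^ m) ^ T.card * ∏ i ∈ T, r i p) := by
          refine Finset.sum_congr rfl fun p _ => ?_
          rw [hexp p, Finset.mul_sum]
      _ = ∑ T ∈ Iset.powerset, ∑ p : Fin α → X,
            W p * (((q:ℝ) ^ m) ^ T.card * ∏ i ∈ T, r i p) := Finset.sum_comm
      _ = ∑ T ∈ Iset.powerset, ((q:ℝ) ^ m) ^ T.card *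
            ∑ p : Fin α → X, W p * ∏ i ∈ T, r i p := by
          refine Finset.sum_congr rfl fun T _ => ?_
          rw [Finset.mul_sum]
          exact Finset.sum_congr rfl fun p _ => by ring
      _ ≤ ∑ T ∈ Iset.powerset, ((q:ℝ) ^ m) ^ T.card *
            ((∏ i ∈ T, ((i:ℕ):ℝ)) * C ^ ((T.card:ℝ)/((α:ℝ)-1))) := by
          refine Finset.sum_le_sum fun T hT => ?_
          exact mul_le_mul_of_nonneg_left (hrep T hT) (by positivity)
      _ = ∑ T ∈ Iset.powerset, ∏ i ∈ T, (β * ((i:ℕ):ℝ)) := by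
          refine Finset.sum_congr rfl fun T hT => ?_
          have hCT : C ^ ((T.card:ℝ)/((α:ℝ)-1)) = (C ^ (1/((α:ℝ)-1))) ^ (T.card:ℕ) := by
            rw [← Real.rpow_natCast (C ^ (1/((α:ℝ)-1))) T.card, ← Real.rpow_mul hC.le]
            congr 1
            ring
          rw [hCT, Finset.prod_mul_distrib, Finset.prod_const, hβdef, mul_pow]
          ring
      _ = ∏ i ∈ Iset, (1 + β * ((i:ℕ):ℝ)) := by
          rw [show (fun i : Fin α => 1 + β * ((i:ℕ):ℝ))
              = fun i : Fin α => (β * ((i:ℕ):ℝ) + 1) by funext i; ring]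
          rw [Finset.prod_add (fun i : Fin α => β * ((i:ℕ):ℝ)) (fun _ => (1:ℝ)) Iset]
          refine Finset.sum_congr rfl fun T hT => ?_
          rw [Finset.prod_const_one, mul_one]
  -- Gauss sum and exponential bound
  have hsumI : ∑ i ∈ Iset, ((i:ℕ):ℝ) = (α:ℝ)*((α:ℝ)-1)/2 := by
    have hsplit := Finset.sum_filter_add_sum_filter_not univ
      (fun i : Fin α => (i:ℕ) ≠ 0) (fun i : Fin α => ((i:ℕ):ℝ))
    have hzero : ∑ i ∈ univ.filter (fun i : Fin α => ¬ (i:ℕ) ≠ 0), ((i:ℕ):ℝ) = 0 := by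
      refine Finset.sum_eq_zero fun i hi => ?_
      simp only [Finset.mem_filter, not_not] at hi
      exact_mod_cast congrArg (Nat.cast : ℕ → ℝ) hi.2
    have h1 : ∑ i ∈ Iset, ((i:ℕ):ℝ) = ∑ i : Fin α, ((i:ℕ):ℝ) := by
      rw [← hsplit, hzero, add_zero]
    rw [h1, Fin.sum_univ_eq_sum_range (fun i => ((i:ℕ):ℝ)) α]
    have hg := Finset.sum_range_id_mul_two α
    have h2 : (((∑ i ∈ Finset.range α, i) * 2 : ℕ) : ℝ) = ((α * (α-1) : ℕ) : ℝ) := by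
      rw [hg]
    push_cast [Nat.cast_sub (by omega : 1 ≤ α)] at h2
    push_cast
    linarith
  have step4 : ∏ i ∈ Iset, (1 + β * ((i:ℕ):ℝ))
      ≤ Real.exp (β * ((α:ℝ)*((α:ℝ)-1)/2)) := by
    calc ∏ i ∈ Iset, (1 + β * ((i:ℕ):ℝ))
        ≤ ∏ i ∈ Iset, Real.exp (β * ((i:ℕ):ℝ)) := by
          refine Finset.prod_le_prod (fun i _ => by positivity) (fun i _ => ?_)
          have := Real.add_one_le_exp (β * ((i:ℕ):ℝ))
          linarith
      _ = Real.exp (∑ i ∈ Iset, β * ((i:ℕ):ℝ)) := (Real.exp_sum _ _).symm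
      _ = Real.exp (β * ((α:ℝ)*((α:ℝ)-1)/2)) := by
          rw [← Finset.mul_sum, hsumI]
  -- entropy computation
  have hα0 : (0:ℝ) < (α:ℝ) := lt_trans one_pos hα1R
  have hCrpow : (∑ x, P x ^ ((α:ℕ):ℝ)) = C := by
    rw [hCdef]
    exact Finset.sum_congr rfl fun x _ => Real.rpow_natCast _ _
  have hlogbC : Real.logb q C = (1 - (α:ℝ)) * renyiH q (α:ℝ) P := by
    rw [renyiH, hCrpow]
    rw [← mul_assoc, mul_inv_cancel₀ (by linarith : (1:ℝ) - (α:ℝ) ≠ 0), one_mul]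
  have hCeq : C = (q:ℝ) ^ ((1 - (α:ℝ)) * renyiH q (α:ℝ) P) := by
    rw [← hlogbC, Real.rpow_logb hq0 (ne_of_gt hq1) hC]
  have hCpow : C ^ (1/((α:ℝ)-1)) = (q:ℝ) ^ (-(renyiH q (α:ℝ) P)) := by
    calc C ^ (1/((α:ℝ)-1))
        = ((q:ℝ) ^ ((1 - (α:ℝ)) * renyiH q (α:ℝ) P)) ^ (1/((α:ℝ)-1)) := by
          rw [← hCeq]
      _ = (q:ℝ) ^ ((1 - (α:ℝ)) * renyiH q (α:ℝ) P * (1/((α:ℝ)-1))) := by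
          rw [← Real.rpow_mul hq0.le]
      _ = (q:ℝ) ^ (-(renyiH q (α:ℝ) P)) := by
          congr 1
          field_simp
          ring
  have hβval : β = (q:ℝ) ^ ((m:ℝ) - renyiH q (α:ℝ) P) := by
    rw [hβdef, hCpow, ← Real.rpow_natCast (q:ℝ) m, ← Real.rpow_add hq0]
    congr 1
  set K : ℝ := (α:ℝ)^2 / (2 * ε * ((α:ℝ)-1) * Real.log q) with hKdef
  have hK0 : 0 < K := by
    apply div_pos (pow_pos hα0 2)
    exact mul_pos (mul_pos (mul_pos two_pos hε) hαsub) hlogq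
  have hKle : K ≤ (q:ℝ) ^ (renyiH q (α:ℝ) P - (m:ℝ)) := by
    have h1 : Real.logb q K ≤ renyiH q (α:ℝ) P - (m:ℝ) := by linarith [hmH]
    exact (Real.logb_le_iff_le_rpow hq1 hK0).1 h1
  have hβK : β ≤ K⁻¹ := by
    rw [hβval, show (m:ℝ) - renyiH q (α:ℝ) P = -(renyiH q (α:ℝ) P - (m:ℝ)) by ring,
      Real.rpow_neg hq0.le]
    exact inv_anti₀ hK0 hKle
  have step5 : β * ((α:ℝ)*((α:ℝ)-1)/2) ≤ ε * ((α:ℝ)-1) * Real.log q := by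
    have h1 : β * ((α:ℝ)*((α:ℝ)-1)/2) ≤ K⁻¹ * ((α:ℝ)^2/2) := by
      apply mul_le_mul hβK ?_ ?_ (inv_nonneg.2 hK0.le)
      · nlinarith [hα0.le, hα1R.le]
      · nlinarith [hα0.le, hα1R.le]
    have h2 : K⁻¹ * ((α:ℝ)^2/2) = ε * ((α:ℝ)-1) * Real.log q := by
      rw [hKdef]
      field_simp
    linarith
  have hchain : SumZ ≤ (q:ℝ) ^ (ε * ((α:ℝ)-1)) := by
    have hfin : Real.exp (β * ((α:ℝ)*((α:ℝ)-1)/2)) ≤ (q:ℝ) ^ (ε * ((α:ℝ)-1)) := by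
      rw [Real.rpow_def_of_pos hq0]
      apply Real.exp_le_exp.2
      calc β * ((α:ℝ)*((α:ℝ)-1)/2) ≤ ε * ((α:ℝ)-1) * Real.log q := step5
        _ = Real.log q * (ε * ((α:ℝ)-1)) := by ring
    exact le_trans step2 (le_trans step3 (le_trans step4 hfin))
  have hSumZ0 : 0 ≤ SumZ := by
    refine Finset.sum_nonneg fun z _ => mul_nonneg ?_ ?_
    · refine Real.rpow_nonneg ?_ _
      exact mul_nonneg (inv_nonneg.2 hcSpos.le) (hF0 z.2 z.1)
    · refine Real.rpow_nonneg ?_ _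
      positivity
  have hlogb : Real.logb q SumZ ≤ ε * ((α:ℝ)-1) := by
    rcases eq_or_lt_of_le hSumZ0 with h0 | h0
    · rw [← h0, Real.logb_zero]
      nlinarith
    · exact (Real.logb_le_iff_le_rpow hq1 h0).2 hchain
  show ((α:ℝ) - 1)⁻¹ * Real.logb q SumZ ≤ ε
  calc ((α:ℝ)-1)⁻¹ * Real.logb q SumZ ≤ ((α:ℝ)-1)⁻¹ * (ε * ((α:ℝ)-1)) :=
      mul_le_mul_of_nonneg_left hlogb (inv_nonneg.2 hαsub.le)
    _ = ε := by
      field_simp
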